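/- The recognisable series x associated to a q-regular sequence y is compatible with regular sequences: x(b0) = x(b) for all words b ∈ {0,…,q−1}*, where b0 denotes b with the letter 0 appended. -/
import Mathlib


/-- the recognisable series associated to a q-regular sequence is compatible:
x(b0) = x(b) for all words b. -/
theorem stmt_9 {K : Type*} [Field K] (q D : ℕ) (hq : 2 ≤ q)
    (y : ℕ → K)
    (u : Matrix (Fin 1) (Fin D) K) (M : Fin q → Matrix (Fin D) (Fin D) K)
    (w : Matrix (Fin D) (Fin 1) K) (v : ℕ → Matrix (Fin D) (Fin 1) K)
    (hv0 : v 0 = w)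
    (hy : ∀ n : ℕ, y n = (u * v n) 0 0)
    (hrec : ∀ (n : ℕ) (r : Fin q), v (q * n + r.val) = M r * v n)
    (x : List (Fin q) → K)
    (hx : ∀ b : List (Fin q), x b = (u * (b.map M).prod * w) 0 0) :
    ∀ b : List (Fin q), x (b ++ [⟨0, by omega⟩]) = x b := by
  intro b
  have h0 : M ⟨0, by omega⟩ * w = w := by
    have := hrec 0 ⟨0, by omega⟩
    simpa [hv0] using this.symm
  rw [hx, hx, List.map_append, List.prod_append]
  simp [Matrix.mul_assoc, h0]
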